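/- If (x,y) ∈ ℤ² satisfies x < y (i.e., k((x,y)) < 0), then writing (a_n, a_{n+1}) = Hⁿ((x,y)), the sequence (a_n) is strictly increasing and tends to infinity; in particular the H-orbit of (x,y) is unbounded. -/
import Mathlib


def H (p : ℤ × ℤ) : ℤ × ℤ :=
  if 0 ≤ p.2 then (p.2, -p.1 + 2 * p.2) else (p.2, -p.1 + 2 * p.2 + 1)

lemma H_inv (p : ℤ × ℤ) (h : p.1 < p.2) : (H p).1 < (H p).2 := by
  unfold H; split <;> simp <;> omega

theorem stmt2 (x y : ℤ) (hxy : x < y) :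
    StrictMono (fun n : ℕ => (H^[n] (x, y)).1) ∧
    Filter.Tendsto (fun n : ℕ => (H^[n] (x, y)).1) Filter.atTop Filter.atTop := by
  have key : ∀ n : ℕ, (H^[n] (x, y)).1 < (H^[n] (x, y)).2 := by
    intro n
    induction n with
    | zero => simpa using hxy
    | succ n ih => rw [Function.iterate_succ_apply']; exact H_inv _ ih
  have hfst : ∀ n : ℕ, (H^[n+1] (x, y)).1 = (H^[n] (x, y)).2 := by
    intro n
    rw [Function.iterate_succ_apply']
    unfold H; split <;> rfl
  have hmono : StrictMono (fun n : ℕ => (H^[n] (x, y)).1) := by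
    apply strictMono_nat_of_lt_succ
    intro n
    simp only [hfst]
    exact key n
  refine ⟨hmono, ?_⟩
  have hlb : ∀ n : ℕ, x + n ≤ (H^[n] (x, y)).1 := by
    intro n
    induction n with
    | zero => simp
    | succ n ih =>
      have h2 : (H^[n] (x, y)).1 < (H^[n+1] (x, y)).1 := hmono (Nat.lt_succ_self n)
      push_cast
      omega
  exact Filter.tendsto_atTop_mono hlb
    (Filter.tendsto_atTop_add_const_left _ x tendsto_natCast_atTop_atTop)
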